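/- Let V be a finite set of n points in a metric space with distance d, and let K satisfy K < n ≤ 2K. Let (A, B) be any bipartition of V into two nonempty parts with |A| ≤ K and |B| ≤ K. Then there exists a bipartition (A', B') of V with |A'| = K (and hence |B'| = n − K), obtained by moving nodes from the lighter part to the heavier part, such that cut(A', B') ≤ 2 · cut(A, B), where cut(A,B) = ∑_{a∈A, b∈B} d(a,b). (This rebalancing step, justified by the triangle inequality, is the core of the 2-approximation of the optimal balanced partition SpltBOpt.) -/

import Mathlib

open Finset

private lemma cut_nonneg {X : Type*} [MetricSpace X] (A B : Finset X) :
    0 ≤ ∑ a ∈ A, ∑ b ∈ B, dist a b :=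
  Finset.sum_nonneg fun _ _ => Finset.sum_nonneg fun _ _ => dist_nonneg

private lemma cut_mono_right {X : Type*} [MetricSpace X] (A : Finset X)
    {B B' : Finset X} (h : B ⊆ B') :
    (∑ a ∈ A, ∑ b ∈ B, dist a b) ≤ ∑ a ∈ A, ∑ b ∈ B', dist a b :=
  Finset.sum_le_sum fun _ _ =>
    Finset.sum_le_sum_of_subset_of_nonneg h (fun _ _ _ => dist_nonneg)

private lemma rebalance_helper {X : Type*} [MetricSpace X] [DecidableEq X]
    (H L : Finset X) (K : ℕ) (hdisj : Disjoint H L)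
    (hHne : H.Nonempty) (hLH : L.card ≤ H.card) (hHK : H.card ≤ K)
    (hK : K < H.card + L.card) :
    ∃ S ⊆ L, (H ∪ S).card = K ∧
      (∑ a ∈ H ∪ S, ∑ b ∈ L \ S, dist a b) ≤
        2 * ∑ a ∈ H, ∑ b ∈ L, dist a b := by
  set W : ℝ := ∑ a ∈ H, ∑ b ∈ L, dist a b with hW
  have hWnn : 0 ≤ W := cut_nonneg H L
  obtain ⟨S, hSL, hScard⟩ := Finset.exists_subset_card_eq (s := L) (n := K - H.card)
    (by omega)
  have hdisjHS : Disjoint H S := hdisj.mono_right hSL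
  refine ⟨S, hSL, ?_, ?_⟩
  · rw [Finset.card_union_of_disjoint hdisjHS, hScard]; omega
  -- key bound: cut(S, L\S) ≤ W
  have hHpos : (0 : ℝ) < H.card := by
    exact_mod_cast Finset.card_pos.mpr hHne
  have hsub1 : (∑ s ∈ S, ∑ h ∈ H, dist s h) ≤ W := by
    rw [Finset.sum_comm]
    calc (∑ h ∈ H, ∑ s ∈ S, dist s h) = ∑ h ∈ H, ∑ s ∈ S, dist h s := by
          simp [dist_comm]
      _ ≤ W := cut_mono_right H hSL
  have hsub2 : (∑ h ∈ H, ∑ b ∈ L \ S, dist h b) ≤ W :=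
    cut_mono_right H (Finset.sdiff_subset)
  have key : (∑ s ∈ S, ∑ b ∈ L \ S, dist s b) ≤ W := by
    have hstep : (H.card : ℝ) * (∑ s ∈ S, ∑ b ∈ L \ S, dist s b) ≤
        (H.card : ℝ) * W := by
      calc (H.card : ℝ) * (∑ s ∈ S, ∑ b ∈ L \ S, dist s b)
          = ∑ h ∈ H, ∑ s ∈ S, ∑ b ∈ L \ S, dist s b := by
            rw [Finset.sum_const, nsmul_eq_mul]
        _ ≤ ∑ h ∈ H, ∑ s ∈ S, ∑ b ∈ L \ S, (dist s h + dist h b) := by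
            refine Finset.sum_le_sum fun h _ => Finset.sum_le_sum fun s _ =>
              Finset.sum_le_sum fun b _ => dist_triangle s h b
        _ = ∑ h ∈ H, (((L \ S).card : ℝ) * ∑ s ∈ S, dist s h
              + (S.card : ℝ) * ∑ b ∈ L \ S, dist h b) := by
            refine Finset.sum_congr rfl fun h _ => ?_
            simp [Finset.sum_add_distrib, Finset.sum_const, nsmul_eq_mul,
              ← Finset.mul_sum]
        _ = ((L \ S).card : ℝ) * (∑ s ∈ S, ∑ h ∈ H, dist s h)
              + (S.card : ℝ) * (∑ h ∈ H, ∑ b ∈ L \ S, dist h b) := by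
            rw [Finset.sum_add_distrib, ← Finset.mul_sum, ← Finset.mul_sum,
              Finset.sum_comm (s := H) (t := S)]
        _ ≤ ((L \ S).card : ℝ) * W + (S.card : ℝ) * W := by
            gcongr <;> positivity
        _ = ((L \ S).card + S.card : ℕ) * W := by push_cast; ring
        _ = (L.card : ℝ) * W := by
            rw [Finset.card_sdiff_add_card_eq_card hSL]
        _ ≤ (H.card : ℝ) * W := by
            have : (L.card : ℝ) ≤ H.card := by exact_mod_cast hLH
            exact mul_le_mul_of_nonneg_right this hWnn
    exact le_of_mul_le_mul_left hstep hHpos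
  calc (∑ a ∈ H ∪ S, ∑ b ∈ L \ S, dist a b)
      = (∑ a ∈ H, ∑ b ∈ L \ S, dist a b) + ∑ a ∈ S, ∑ b ∈ L \ S, dist a b :=
        Finset.sum_union hdisjHS
    _ ≤ W + W := add_le_add hsub2 key
    _ = 2 * W := by ring

/-- The rebalancing step of SpltBOpt: given `K < n ≤ 2K` and a bipartition
`(A, B)` of `V` into nonempty parts of size at most `K`, moving nodes from the
lighter part to the heavier part yields a bipartition `(A', V∖A')` with
`|A'| = K` whose cut weight is at most twice that of `(A, B)`. -/
theorem spltBOpt_rebalancing {X : Type*} [MetricSpace X] [DecidableEq X]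
    (V A B : Finset X) (K : ℕ)
    (hUnion : A ∪ B = V) (hdisj : Disjoint A B)
    (hAne : A.Nonempty) (hBne : B.Nonempty)
    (hAK : A.card ≤ K) (hBK : B.card ≤ K)
    (hK : K < V.card) (hn : V.card ≤ 2 * K) :
    ∃ A' ⊆ V, A'.card = K ∧ (A ⊆ A' ∨ B ⊆ A') ∧
      (∑ a ∈ A', ∑ b ∈ V \ A', dist a b) ≤
        2 * ∑ a ∈ A, ∑ b ∈ B, dist a b := by
  have hVcard : V.card = A.card + B.card := by
    rw [← hUnion, Finset.card_union_of_disjoint hdisj]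
  by_cases hc : B.card ≤ A.card
  · obtain ⟨S, hSL, hcard, hcut⟩ := rebalance_helper A B K hdisj hAne hc hAK
      (by omega)
    refine ⟨A ∪ S, ?_, hcard, Or.inl Finset.subset_union_left, ?_⟩
    · rw [← hUnion]; exact Finset.union_subset_union_right hSL
    · have hsd : V \ (A ∪ S) = B \ S := by
        ext x
        simp only [Finset.mem_sdiff, Finset.mem_union, ← hUnion]
        constructor
        · rintro ⟨hx, hx2⟩
          push_neg at hx2
          exact ⟨hx.resolve_left hx2.1, hx2.2⟩
        · rintro ⟨hxB, hxS⟩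
          exact ⟨Or.inr hxB, by
            push_neg
            exact ⟨fun hxA => Finset.disjoint_left.mp hdisj hxA hxB, hxS⟩⟩
      rw [hsd]; exact hcut
  · push_neg at hc
    obtain ⟨S, hSL, hcard, hcut⟩ := rebalance_helper B A K hdisj.symm hBne hc.le
      hBK (by omega)
    refine ⟨B ∪ S, ?_, hcard, Or.inr Finset.subset_union_left, ?_⟩
    · rw [← hUnion, Finset.union_comm A B]
      exact Finset.union_subset_union_right hSL
    · have hsd : V \ (B ∪ S) = A \ S := by
        ext x
        simp only [Finset.mem_sdiff, Finset.mem_union, ← hUnion]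
        constructor
        · rintro ⟨hx, hx2⟩
          push_neg at hx2
          exact ⟨hx.resolve_right hx2.1, hx2.2⟩
        · rintro ⟨hxA, hxS⟩
          exact ⟨Or.inl hxA, by
            push_neg
            exact ⟨fun hxB => Finset.disjoint_left.mp hdisj hxA hxB, hxS⟩⟩
      have hsym : (∑ a ∈ B, ∑ b ∈ A, dist a b) = ∑ a ∈ A, ∑ b ∈ B, dist a b := by
        rw [Finset.sum_comm]; simp [dist_comm]
      rw [hsd]
      calc (∑ a ∈ B ∪ S, ∑ b ∈ A \ S, dist a b)
          ≤ 2 * ∑ a ∈ B, ∑ b ∈ A, dist a b := hcut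
        _ = 2 * ∑ a ∈ A, ∑ b ∈ B, dist a b := by rw [hsym]
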